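/- arXiv:2604.02533 — 8 statements merged into one kernel-verified Lean document; each statement's English description precedes it below -/
import Mathlib

section
/- Let m > 0 and let U : ℝ → ℝ be continuous on [0,∞), continuously differentiable on (0,∞) with U(0) = 0, U'(q) > 0 for q > 0, and U(q) → ∞ as q → ∞; let q_max(E) denote the unique q > 0 with U(q) = E. Fix E₀ > 0 and assume the function q ↦ (E − U(q))^{−1/2} is interval-integrable on (0, q_max(E)) for E in a neighbourhood of E₀. Then the action J(E) = (√(2m)/π) ∫₀^{q_max(E)} √(E − U(q)) dq is differentiable at E₀ with derivative J'(E₀) = (√(2m)/(2π)) ∫₀^{q_max(E₀)} (E₀ − U(q))^{−1/2} dq; in particular the endpoint contribution from q_max(E) vanishes because E − U(q_max(E)) = 0. -/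
open Real Filter MeasureTheory

lemma aux_rpow_nonpos {x : ℝ} (hx : x ≤ 0) : x ^ (-(1/2) : ℝ) = 0 := by
  rcases lt_or_eq_of_le hx with h | h
  · rw [Real.rpow_def_of_neg h]
    have : Real.cos (-(1/2) * π) = 0 := by
      rw [neg_mul, Real.cos_neg]
      rw [show (1/2 : ℝ) * π = π / 2 by ring, Real.cos_pi_div_two]
    rw [this, mul_zero]
  · subst h; exact Real.zero_rpow (by norm_num : (-(1/2) : ℝ) ≠ 0)

lemma aux_rpow_pos {x : ℝ} (hx : 0 < x) : x ^ (-(1/2) : ℝ) = 1 / Real.sqrt x := by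
  rw [Real.rpow_neg hx.le, Real.sqrt_eq_rpow]
  norm_num

lemma aux_inv_two_sqrt {x : ℝ} (hx : x ≠ 0) :
    1 / (2 * Real.sqrt x) = (1/2) * x ^ (-(1/2) : ℝ) := by
  rcases lt_or_gt_of_ne hx with h | h
  · rw [aux_rpow_nonpos h.le, Real.sqrt_eq_zero'.mpr h.le]
    simp
  · rw [aux_rpow_pos h]; ring

lemma aux_sqrt_sub_le {a b : ℝ} (ha : 0 < a) (hba : b ≤ a) :
    Real.sqrt a - Real.sqrt b ≤ (a - b) / Real.sqrt a := by
  have hsa : 0 < Real.sqrt a := Real.sqrt_pos.mpr ha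
  rw [le_div_iff₀ hsa]
  have h1 : Real.sqrt a * Real.sqrt a = a := Real.mul_self_sqrt ha.le
  rcases le_or_gt b 0 with hb | hb
  · rw [Real.sqrt_eq_zero'.mpr hb]
    nlinarith
  · have h2 : Real.sqrt b * Real.sqrt b = b := Real.mul_self_sqrt hb.le
    have h3 : Real.sqrt b ≤ Real.sqrt a := Real.sqrt_le_sqrt hba
    nlinarith [Real.sqrt_nonneg b]

/-- Leibniz differentiation of the action: under monotonicity and
local interval-integrability of `q ↦ (E − U q)^(−1/2)` near `E₀`, the action
`J E = (√(2m)/π) ∫₀^{qmax E} √(E − U q) dq` is differentiable at `E₀` with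
`J'(E₀) = (√(2m)/(2π)) ∫₀^{qmax E₀} (E₀ − U q)^(−1/2) dq`; the endpoint term
vanishes since `E − U (qmax E) = 0`. -/
theorem action_hasDerivAt
    (m : ℝ) (hm : 0 < m)
    (U U' : ℝ → ℝ)
    (hUcont : ContinuousOn U (Set.Ici 0))
    (hU0 : U 0 = 0)
    (hUdiff : ∀ q > (0:ℝ), HasDerivAt U (U' q) q)
    (hU'cont : ContinuousOn U' (Set.Ioi 0))
    (hU'pos : ∀ q > (0:ℝ), 0 < U' q)
    (hUtop : Filter.Tendsto U Filter.atTop Filter.atTop)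
    (qmax : ℝ → ℝ)
    (hqmax : ∀ E > (0:ℝ), 0 < qmax E ∧ U (qmax E) = E)
    (E₀ : ℝ) (hE₀ : 0 < E₀)
    (hInt : ∀ᶠ E in nhds E₀, IntervalIntegrable
      (fun q => (E - U q) ^ (-(1/2) : ℝ)) MeasureTheory.volume 0 (qmax E)) :
    HasDerivAt
      (fun E => (Real.sqrt (2 * m) / Real.pi) *
        ∫ q in (0:ℝ)..(qmax E), Real.sqrt (E - U q))
      ((Real.sqrt (2 * m) / (2 * Real.pi)) *
        ∫ q in (0:ℝ)..(qmax E₀), (E₀ - U q) ^ (-(1/2) : ℝ)) E₀ := by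
  -- Basic monotonicity of U
  have hmono : StrictMonoOn U (Set.Ici 0) := by
    apply strictMonoOn_of_deriv_pos (convex_Ici 0) hUcont
    intro x hx
    rw [interior_Ici] at hx
    rw [(hUdiff x hx).deriv]
    exact hU'pos x hx
  obtain ⟨hq₀pos, hUq₀⟩ := hqmax E₀ hE₀
  obtain ⟨hApos, hUA⟩ := hqmax (E₀ + 1) (by linarith)
  set q₀ := qmax E₀ with hq₀def
  set A := qmax (E₀ + 1) with hAdef
  have hq₀A : q₀ < A :=
    (hmono.lt_iff_lt hq₀pos.le hApos.le).mp (by rw [hUq₀, hUA]; linarith)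
  have hUlt : ∀ q : ℝ, 0 ≤ q → q < q₀ → U q < E₀ := by
    intro q h0 hlt
    have := hmono h0 hq₀pos.le hlt
    rwa [hUq₀] at this
  have hUgt : ∀ q : ℝ, q₀ < q → E₀ < U q := by
    intro q hlt
    have := hmono hq₀pos.le (hq₀pos.le.trans hlt.le) hlt
    rwa [hUq₀] at this
  -- continuity of the integrands
  have hIciA : Set.Icc (0:ℝ) A ⊆ Set.Ici 0 := fun x hx => hx.1
  have hIocA : Set.Ioc (0:ℝ) A ⊆ Set.Ici 0 := fun x hx => hx.1.le
  have hcontS : ∀ E : ℝ, ContinuousOn (fun q => Real.sqrt (E - U q)) (Set.Ici 0) :=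
    fun E => Real.continuous_sqrt.comp_continuousOn (continuousOn_const.sub hUcont)
  have hintS : ∀ E : ℝ, IntegrableOn (fun q => Real.sqrt (E - U q)) (Set.Icc 0 A) volume :=
    fun E => ((hcontS E).mono hIciA).integrableOn_Icc
  -- slope function S and limit function L
  set S : ℝ → ℝ → ℝ :=
    fun E q => (Real.sqrt (E - U q) - Real.sqrt (E₀ - U q)) / (E - E₀) with hSdef
  set L : ℝ → ℝ := fun q => (1/2) * (E₀ - U q) ^ (-(1/2) : ℝ) with hLdef
  set g : ℝ → ℝ := fun q => (E₀ - U q) ^ (-(1/2) : ℝ) with hgdef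
  -- integrability of g
  have hgInt1 : IntegrableOn g (Set.Ioc 0 q₀) volume := by
    have := hInt.self_of_nhds
    rwa [intervalIntegrable_iff_integrableOn_Ioc_of_le hq₀pos.le] at this
  have hg0 : ∀ q ∈ Set.Ioc q₀ A, g q = 0 := by
    intro q hq
    exact aux_rpow_nonpos (by have := hUgt q hq.1; linarith)
  have hgInt : IntegrableOn g (Set.Ioc 0 A) volume := by
    rw [← Set.Ioc_union_Ioc_eq_Ioc hq₀pos.le hq₀A.le]
    exact hgInt1.union ((integrableOn_zero (μ := volume) (s := Set.Ioc q₀ A)).congr_fun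
      (fun q hq => (hg0 q hq).symm) measurableSet_Ioc)
  -- pointwise limit
  have hptlim : ∀ q : ℝ, U q ≠ E₀ →
      Tendsto (fun E => S E q) (nhdsWithin E₀ {E₀}ᶜ) (nhds (L q)) := by
    intro q hne
    have hne' : E₀ - U q ≠ 0 := sub_ne_zero.mpr (Ne.symm hne)
    have h1 : HasDerivAt (fun e : ℝ => Real.sqrt (e - U q))
        (1 / (2 * Real.sqrt (E₀ - U q))) E₀ := by
      exact ((Real.hasDerivAt_sqrt hne').comp E₀ ((hasDerivAt_id E₀).sub_const (U q))).congr_deriv (mul_one _)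
    have h2 := hasDerivAt_iff_tendsto_slope.mp h1
    rw [aux_inv_two_sqrt hne'] at h2
    refine h2.congr (fun E => ?_)
    rw [slope_def_field]
  -- measurability of S E
  have hSmeas : ∀ (E : ℝ) (s : Set ℝ), s ⊆ Set.Ici 0 → MeasurableSet s →
      AEStronglyMeasurable (S E) (volume.restrict s) := by
    intro E s hs hms
    exact ((((hcontS E).mono hs).sub ((hcontS E₀).mono hs)).div_const _).aestronglyMeasurable hms
  -- integrability of S E on subsets of Icc 0 A
  have hSint : ∀ (E : ℝ) (s : Set ℝ), s ⊆ Set.Icc 0 A → IntegrableOn (S E) s volume := by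
    intro E s hs
    exact IntegrableOn.mono_set (((hintS E).sub (hintS E₀)).div_const _) hs
  -- bound for E < E₀
  have hboundL : ∀ E : ℝ, E < E₀ → ∀ q : ℝ, ‖S E q‖ ≤ g q := by
    intro E hE q
    rcases le_or_gt (E₀ - U q) 0 with h | h
    · have h2 : E - U q ≤ 0 := by linarith
      simp only [hSdef, hgdef]
      rw [Real.sqrt_eq_zero'.mpr h, Real.sqrt_eq_zero'.mpr h2, sub_zero, zero_div,
        norm_zero, aux_rpow_nonpos h]
    · have key : Real.sqrt (E₀ - U q) - Real.sqrt (E - U q) ≤ (E₀ - E) / Real.sqrt (E₀ - U q) := by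
        have := aux_sqrt_sub_le h (show E - U q ≤ E₀ - U q by linarith)
        simpa using this
      have hnum : 0 ≤ Real.sqrt (E₀ - U q) - Real.sqrt (E - U q) :=
        sub_nonneg.mpr (Real.sqrt_le_sqrt (by linarith))
      have hSval : S E q = (Real.sqrt (E₀ - U q) - Real.sqrt (E - U q)) / (E₀ - E) := by
        simp only [hSdef]
        rw [← neg_div_neg_eq]; ring_nf
      have hgq : g q = 1 / Real.sqrt (E₀ - U q) := aux_rpow_pos h
      rw [hSval, Real.norm_eq_abs, abs_of_nonneg (div_nonneg hnum (by linarith)), hgq]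
      have hE' : (0:ℝ) < E₀ - E := by linarith
      rw [div_le_iff₀ hE']
      calc Real.sqrt (E₀ - U q) - Real.sqrt (E - U q)
          ≤ (E₀ - E) / Real.sqrt (E₀ - U q) := key
        _ = 1 / Real.sqrt (E₀ - U q) * (E₀ - E) := by
            rw [div_eq_mul_inv, mul_comm, one_div]
  -- bound for E > E₀ on points with U q < E₀
  have hboundR : ∀ E : ℝ, E₀ < E → ∀ q : ℝ, U q < E₀ → ‖S E q‖ ≤ g q := by
    intro E hE q hq
    have hb : (0:ℝ) < E₀ - U q := by linarith
    have ha : (0:ℝ) < E - U q := by linarith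
    have key := aux_sqrt_sub_le ha (show E₀ - U q ≤ E - U q by linarith)
    have key2 : Real.sqrt (E - U q) - Real.sqrt (E₀ - U q) ≤ (E - E₀) / Real.sqrt (E₀ - U q) := by
      calc Real.sqrt (E - U q) - Real.sqrt (E₀ - U q)
          ≤ (E - U q - (E₀ - U q)) / Real.sqrt (E - U q) := key
        _ = (E - E₀) / Real.sqrt (E - U q) := by ring_nf
        _ ≤ (E - E₀) / Real.sqrt (E₀ - U q) := by
            apply div_le_div_of_nonneg_left (by linarith) (Real.sqrt_pos.mpr hb)
            exact Real.sqrt_le_sqrt (by linarith)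
    have hnum : 0 ≤ Real.sqrt (E - U q) - Real.sqrt (E₀ - U q) :=
      sub_nonneg.mpr (Real.sqrt_le_sqrt (by linarith))
    have hE' : (0:ℝ) < E - E₀ := by linarith
    have hgq : g q = 1 / Real.sqrt (E₀ - U q) := aux_rpow_pos hb
    have hSval : S E q = (Real.sqrt (E - U q) - Real.sqrt (E₀ - U q)) / (E - E₀) := rfl
    rw [hSval, hgq, Real.norm_eq_abs, abs_of_nonneg (div_nonneg hnum hE'.le),
      div_le_iff₀ hE']
    calc Real.sqrt (E - U q) - Real.sqrt (E₀ - U q)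
        ≤ (E - E₀) / Real.sqrt (E₀ - U q) := key2
      _ = 1 / Real.sqrt (E₀ - U q) * (E - E₀) := by
          rw [div_eq_mul_inv, mul_comm, one_div]
  -- a.e. q ≠ q₀
  have hae_ne : ∀ᵐ q : ℝ, q ≠ q₀ := by
    refine ae_iff.mpr ?_
    simp only [not_not]
    exact measure_singleton q₀
  -- left limit
  have hleft : Tendsto (fun E => ∫ q in Set.Ioc 0 A, S E q)
      (nhdsWithin E₀ (Set.Iio E₀)) (nhds (∫ q in Set.Ioc 0 A, L q)) := by
    apply tendsto_integral_filter_of_dominated_convergence g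
    · exact Eventually.of_forall (fun E => hSmeas E _ hIocA measurableSet_Ioc)
    · filter_upwards [self_mem_nhdsWithin] with E hE
      exact ae_of_all _ (fun q => hboundL E hE q)
    · exact hgInt
    · filter_upwards [ae_restrict_mem measurableSet_Ioc, ae_restrict_of_ae hae_ne]
        with q hq hne
      have hUne : U q ≠ E₀ := by
        rcases lt_trichotomy q q₀ with h | h | h
        · exact ne_of_lt (hUlt q hq.1.le h)
        · exact absurd h hne
        · exact ne_of_gt (hUgt q h)
      exact (hptlim q hUne).mono_left
        (nhdsWithin_mono E₀ (fun x hx => ne_of_lt hx))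
  -- local lower bound on U' near q₀
  set c := U' q₀ / 2 with hcdef
  have hcpos : 0 < c := half_pos (hU'pos q₀ hq₀pos)
  have hev : ∀ᶠ x in nhds q₀, U' x ∈ Set.Ioi c :=
    (hU'cont.continuousAt (Ioi_mem_nhds hq₀pos)) (Ioi_mem_nhds (half_lt_self (hU'pos q₀ hq₀pos)))
  obtain ⟨ε, hεpos, hε⟩ := Metric.eventually_nhds_iff.mp hev
  set δ := ε / 2 with hδdef
  have hδpos : 0 < δ := half_pos hεpos
  have hδball : ∀ x ∈ Set.Icc q₀ (q₀ + δ), c < U' x := by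
    intro x hx
    apply hε
    rw [Real.dist_eq, abs_of_nonneg (by linarith [hx.1])]
    have := hx.2
    simp only [hδdef] at this ⊢
    linarith
  have hMVT : ∀ q ∈ Set.Icc q₀ (q₀ + δ), c * (q - q₀) ≤ U q - E₀ := by
    have hmonoφ : MonotoneOn (fun x => U x - c * x) (Set.Icc q₀ (q₀ + δ)) := by
      apply monotoneOn_of_deriv_nonneg (convex_Icc _ _)
      · exact (hUcont.mono (fun x hx => le_trans hq₀pos.le hx.1)).sub
          ((continuous_const.mul continuous_id).continuousOn)
      · intro x hx
        rw [interior_Icc] at hx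
        exact (((hUdiff x (lt_trans hq₀pos hx.1)).sub
          ((hasDerivAt_id x).const_mul c)).differentiableAt).differentiableWithinAt
      · intro x hx
        rw [interior_Icc] at hx
        have hφ : HasDerivAt (fun y => U y - c * y) (U' x - c) x := by
          exact ((hUdiff x (lt_trans hq₀pos hx.1)).sub ((hasDerivAt_id x).const_mul c)).congr_deriv (by ring)
        rw [hφ.deriv]
        have := hδball x (Set.mem_Icc.mpr ⟨hx.1.le, hx.2.le⟩)
        linarith
    intro q hq
    have h1 := hmonoφ (Set.left_mem_Icc.mpr (by linarith)) hq (Set.mem_Icc.mp hq).1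
    simp only at h1
    rw [hUq₀] at h1
    have hexp : c * (q - q₀) = c * q - c * q₀ := by ring
    linarith
  -- tail estimate on the right
  have hIocq₀A : Set.Ioc q₀ A ⊆ Set.Icc 0 A := fun x hx => ⟨le_trans hq₀pos.le hx.1.le, hx.2⟩
  have htail : Tendsto (fun E => ∫ q in Set.Ioc q₀ A, S E q)
      (nhdsWithin E₀ (Set.Ioi E₀)) (nhds 0) := by
    have hupper : Tendsto (fun E => Real.sqrt (E - E₀) / c)
        (nhdsWithin E₀ (Set.Ioi E₀)) (nhds 0) := by
      have hco : Continuous (fun E : ℝ => Real.sqrt (E - E₀) / c) :=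
        (Real.continuous_sqrt.comp (continuous_id.sub continuous_const)).div_const c
      have h2 := (hco.tendsto E₀).mono_left (nhdsWithin_le_nhds (s := Set.Ioi E₀))
      simpa using h2
    apply tendsto_of_tendsto_of_tendsto_of_le_of_le' tendsto_const_nhds hupper
    · filter_upwards [self_mem_nhdsWithin] with E hE
      refine setIntegral_nonneg measurableSet_Ioc (fun q hq => ?_)
      have hE' : E₀ < E := hE
      exact div_nonneg (sub_nonneg.mpr (Real.sqrt_le_sqrt (by linarith))) (by linarith)
    · filter_upwards [Ioc_mem_nhdsGT_of_mem
        (show E₀ ∈ Set.Ico E₀ (E₀ + c * δ) from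
          Set.left_mem_Ico.mpr (by linarith [mul_pos hcpos hδpos]))] with E hE
      have hh : 0 < E - E₀ := sub_pos.mpr hE.1
      have hhc : E - E₀ ≤ c * δ := by linarith [hE.2]
      have hind : ∀ q ∈ Set.Ioc q₀ A, S E q ≤
          (Set.Ioc q₀ (q₀ + (E - E₀)/c)).indicator
            (fun _ => Real.sqrt (E - E₀) / (E - E₀)) q := by
        intro q hq
        have hUq : E₀ < U q := hUgt q hq.1
        rcases le_or_gt q (q₀ + (E - E₀)/c) with hle | hgt
        · rw [Set.indicator_of_mem (Set.mem_Ioc.mpr ⟨hq.1, hle⟩)]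
          have hS : S E q = Real.sqrt (E - U q) / (E - E₀) := by
            simp only [hSdef]
            rw [Real.sqrt_eq_zero'.mpr (show E₀ - U q ≤ 0 by linarith), sub_zero]
          rw [hS]
          gcongr
          
        · rw [Set.indicator_of_notMem (fun hmem => absurd hmem.2 (not_le.mpr hgt))]
          have hEU : E - U q ≤ 0 := by
            rcases le_or_gt q (q₀ + δ) with h1 | h1
            · have h2 := hMVT q (Set.mem_Icc.mpr ⟨hq.1.le, h1⟩)
              have h3 : c * ((E - E₀)/c) < c * (q - q₀) :=
                mul_lt_mul_of_pos_left (by linarith) hcpos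
              rw [mul_div_cancel₀ _ hcpos.ne'] at h3
              linarith
            · have h2 := hMVT (q₀ + δ) (Set.mem_Icc.mpr ⟨by linarith, le_refl _⟩)
              have h3 : U (q₀ + δ) ≤ U q :=
                hmono.monotoneOn (by exact le_trans hq₀pos.le (by linarith))
                  (le_trans hq₀pos.le hq.1.le) h1.le
              have h4 : c * δ ≤ U (q₀ + δ) - E₀ := by
                have := h2
                simpa using this
              linarith
          have hS : S E q = 0 := by
            simp only [hSdef]
            rw [Real.sqrt_eq_zero'.mpr hEU,
              Real.sqrt_eq_zero'.mpr (show E₀ - U q ≤ 0 by linarith), sub_zero, zero_div]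
          rw [hS]
      have hintind : Integrable ((Set.Ioc q₀ (q₀ + (E - E₀)/c)).indicator
          (fun _ => Real.sqrt (E - E₀) / (E - E₀))) volume := by
        rw [integrable_indicator_iff measurableSet_Ioc]
        exact integrableOn_const measure_Ioc_lt_top.ne
      calc ∫ q in Set.Ioc q₀ A, S E q
          ≤ ∫ q in Set.Ioc q₀ A, (Set.Ioc q₀ (q₀ + (E - E₀)/c)).indicator
              (fun _ => Real.sqrt (E - E₀) / (E - E₀)) q :=
            setIntegral_mono_on (hSint E _ hIocq₀A) hintind.integrableOn
              measurableSet_Ioc hind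
        _ ≤ ∫ q, (Set.Ioc q₀ (q₀ + (E - E₀)/c)).indicator
              (fun _ => Real.sqrt (E - E₀) / (E - E₀)) q :=
            setIntegral_le_integral hintind (ae_of_all _
              (Set.indicator_nonneg (fun _ _ => div_nonneg (Real.sqrt_nonneg _) hh.le)))
        _ = (volume (Set.Ioc q₀ (q₀ + (E - E₀)/c))).toReal •
              (Real.sqrt (E - E₀) / (E - E₀)) :=
            integral_indicator_const _ measurableSet_Ioc
        _ = Real.sqrt (E - E₀) / c := by
            rw [Real.volume_Ioc, show q₀ + (E - E₀)/c - q₀ = (E - E₀)/c by ring,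
              ENNReal.toReal_ofReal (div_nonneg hh.le hcpos.le), smul_eq_mul]
            field_simp
  -- right limit, main part
  have hIoc0q₀Ici : Set.Ioc (0:ℝ) q₀ ⊆ Set.Ici 0 := fun x hx => hx.1.le
  have hIocsub1 : Set.Ioc (0:ℝ) q₀ ⊆ Set.Icc 0 A := fun x hx => ⟨hx.1.le, hx.2.trans hq₀A.le⟩
  have hrightmain : Tendsto (fun E => ∫ q in Set.Ioc 0 q₀, S E q)
      (nhdsWithin E₀ (Set.Ioi E₀)) (nhds (∫ q in Set.Ioc 0 q₀, L q)) := by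
    apply tendsto_integral_filter_of_dominated_convergence g
    · exact Eventually.of_forall (fun E => hSmeas E _ hIoc0q₀Ici measurableSet_Ioc)
    · filter_upwards [self_mem_nhdsWithin] with E hE
      filter_upwards [ae_restrict_mem measurableSet_Ioc, ae_restrict_of_ae hae_ne]
        with q hq hne
      exact hboundR E hE q (hUlt q hq.1.le (lt_of_le_of_ne hq.2 hne))
    · exact hgInt1
    · filter_upwards [ae_restrict_mem measurableSet_Ioc, ae_restrict_of_ae hae_ne]
        with q hq hne
      exact (hptlim q (ne_of_lt (hUlt q hq.1.le (lt_of_le_of_ne hq.2 hne)))).mono_left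
        (nhdsWithin_mono E₀ (fun x hx => ne_of_gt hx))
  -- splitting the integrals at q₀
  have hdisj : Disjoint (Set.Ioc (0:ℝ) q₀) (Set.Ioc q₀ A) := Set.Ioc_disjoint_Ioc_of_le le_rfl
  have hSsplit : ∀ E : ℝ, ∫ q in Set.Ioc 0 A, S E q =
      (∫ q in Set.Ioc 0 q₀, S E q) + ∫ q in Set.Ioc q₀ A, S E q := by
    intro E
    rw [← Set.Ioc_union_Ioc_eq_Ioc hq₀pos.le hq₀A.le,
      setIntegral_union hdisj measurableSet_Ioc (hSint E _ hIocsub1) (hSint E _ hIocq₀A)]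
  have hLint1 : IntegrableOn L (Set.Ioc 0 q₀) volume := hgInt1.const_mul (1/2)
  have hL0 : ∫ q in Set.Ioc q₀ A, L q = 0 := by
    rw [setIntegral_congr_fun measurableSet_Ioc
      (fun q hq => show L q = (0:ℝ) by
        simp only [hLdef]
        have h := hg0 q hq
        simp only [hgdef] at h
        rw [h, mul_zero])]
    simp
  have hLsplit : ∫ q in Set.Ioc 0 A, L q = ∫ q in Set.Ioc 0 q₀, L q := by
    rw [← Set.Ioc_union_Ioc_eq_Ioc hq₀pos.le hq₀A.le,
      setIntegral_union hdisj measurableSet_Ioc hLint1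
        ((integrableOn_zero (μ := volume) (s := Set.Ioc q₀ A)).congr_fun
          (fun q hq => by
            have h := hg0 q hq
            simp only [hgdef] at h
            simp only [hLdef, h, mul_zero]) measurableSet_Ioc),
      hL0, add_zero]
  have hright : Tendsto (fun E => ∫ q in Set.Ioc 0 A, S E q)
      (nhdsWithin E₀ (Set.Ioi E₀)) (nhds (∫ q in Set.Ioc 0 A, L q)) := by
    rw [funext hSsplit, hLsplit, ← add_zero (∫ q in Set.Ioc 0 q₀, L q)]
    exact hrightmain.add htail
  -- the slope of the fixed-endpoint integral
  have hslope_eq : ∀ E : ℝ,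
      slope (fun E' => ∫ q in (0:ℝ)..A, Real.sqrt (E' - U q)) E₀ E
        = ∫ q in Set.Ioc 0 A, S E q := by
    intro E
    have hii : ∀ E' : ℝ, IntervalIntegrable (fun q => Real.sqrt (E' - U q)) volume 0 A :=
      fun E' => ((hcontS E').mono (by
        rw [Set.uIcc_of_le hApos.le]; exact hIciA)).intervalIntegrable
    rw [slope_def_field, ← intervalIntegral.integral_sub (hii E) (hii E₀),
      ← intervalIntegral.integral_div, intervalIntegral.integral_of_le hApos.le]
  have hG : HasDerivAt (fun E => ∫ q in (0:ℝ)..A, Real.sqrt (E - U q))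
      (∫ q in Set.Ioc 0 A, L q) E₀ := by
    rw [hasDerivAt_iff_tendsto_slope, funext hslope_eq, ← nhdsLT_sup_nhdsGT]
    exact tendsto_sup.mpr ⟨hleft, hright⟩
  -- the action equals the fixed-endpoint integral near E₀
  have hFG : (fun E => Real.sqrt (2*m)/π * ∫ q in (0:ℝ)..(qmax E), Real.sqrt (E - U q))
      =ᶠ[nhds E₀]
      (fun E => Real.sqrt (2*m)/π * ∫ q in (0:ℝ)..A, Real.sqrt (E - U q)) := by
    filter_upwards [Ioo_mem_nhds hE₀ (lt_add_one E₀)] with E hE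
    obtain ⟨hqEpos, hUqE⟩ := hqmax E hE.1
    have hqEA : qmax E ≤ A := le_of_lt ((hmono.lt_iff_lt hqEpos.le hApos.le).mp
      (by rw [hUqE, hUA]; exact hE.2))
    have hzero : ∫ q in (qmax E)..A, Real.sqrt (E - U q) = 0 := by
      rw [intervalIntegral.integral_congr (g := fun _ => (0:ℝ)) ?_,
        intervalIntegral.integral_zero]
      intro q hq
      rw [Set.uIcc_of_le hqEA] at hq
      have hUq : U (qmax E) ≤ U q :=
        hmono.monotoneOn hqEpos.le (le_trans hqEpos.le hq.1) hq.1
      rw [hUqE] at hUq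
      exact Real.sqrt_eq_zero'.mpr (by linarith)
    have hint1 : IntervalIntegrable (fun q => Real.sqrt (E - U q)) volume 0 (qmax E) :=
      ((hcontS E).mono (by
        rw [Set.uIcc_of_le hqEpos.le]; exact fun x hx => hx.1)).intervalIntegrable
    have hint2 : IntervalIntegrable (fun q => Real.sqrt (E - U q)) volume (qmax E) A :=
      ((hcontS E).mono (by
        rw [Set.uIcc_of_le hqEA]; exact fun x hx => le_trans hqEpos.le hx.1)).intervalIntegrable
    have := intervalIntegral.integral_add_adjacent_intervals hint1 hint2
    rw [hzero, add_zero] at this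
    rw [this]
  rw [EventuallyEq.hasDerivAt_iff hFG]
  have hfinal := hG.const_mul (Real.sqrt (2*m)/π)
  refine hfinal.congr_deriv ?_
  rw [hLsplit, intervalIntegral.integral_of_le hq₀pos.le]
  have hLg : ∫ q in Set.Ioc 0 q₀, L q = (1/2) * ∫ q in Set.Ioc 0 q₀, g q := by
    simp only [hLdef, hgdef]
    exact MeasureTheory.integral_const_mul _ _
  rw [hLg]
  have hgg : (∫ q in Set.Ioc (0:ℝ) q₀, (E₀ - U q) ^ (-(1/2) : ℝ)) = ∫ q in Set.Ioc (0:ℝ) q₀, g q := rfl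
  rw [hgg]
  ring
end

section
/- Let m, M, K > 0 and let U : ℝ → ℝ be differentiable on (0,∞) with U(q) > 0 and U'(q) > 0 for q > 0. Let q : ℝ → ℝ be twice differentiable on an open interval I with q(t) > 0 for t ∈ I, satisfying m·q''(t) + U'(q(t)) = 0 on I. Define x(t) = √(2·U(q(t))/K), w(t) = √(m/M)·q'(t), and the time-reparametrisation rate r(t) = √(M/m)·U'(q(t))/√(2K·U(q(t))). Then for all t ∈ I: (i) x'(t) = r(t)·w(t), and (ii) M·w'(t) = −K·x(t)·r(t). (Equivalently, in the reparametrised time τ with dτ/dt = r, the transformed coordinate satisfies the exact harmonic oscillator equation M·d²x/dτ² + K·x = 0.) -/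
/-- **Theorem 2, harmonic regularisation.** For the conservative
contact oscillator `m q'' + U'(q) = 0` with `U > 0`, `U' > 0` on `(0,∞)`, the
energy coordinate `x = √(2U(q)/K)`, the transformed velocity `w = √(m/M) q'`,
and the reparametrisation rate `r = √(M/m) U'(q)/√(2K U(q))` satisfy
`x' = r·w` and `M·w' = −K·x·r` on the interval, i.e. in the reparametrised time
`τ` (with `dτ/dt = r`) the motion is the exact harmonic oscillator
`M x'' + K x = 0`. -/
theorem harmonic_regularisation
    (m M K : ℝ) (hm : 0 < m) (hM : 0 < M) (hK : 0 < K)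
    (U U' : ℝ → ℝ)
    (hUdiff : ∀ s > (0:ℝ), HasDerivAt U (U' s) s)
    (hUpos : ∀ s > (0:ℝ), 0 < U s)
    (hU'pos : ∀ s > (0:ℝ), 0 < U' s)
    (I : Set ℝ) (hI : IsOpen I)
    (q q' q'' : ℝ → ℝ)
    (hq : ∀ t ∈ I, HasDerivAt q (q' t) t)
    (hq' : ∀ t ∈ I, HasDerivAt q' (q'' t) t)
    (hqpos : ∀ t ∈ I, 0 < q t)
    (hode : ∀ t ∈ I, m * q'' t + U' (q t) = 0)
    (x w r : ℝ → ℝ)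
    (hx : ∀ t, x t = Real.sqrt (2 * U (q t) / K))
    (hw : ∀ t, w t = Real.sqrt (m / M) * q' t)
    (hr : ∀ t, r t = Real.sqrt (M / m) * U' (q t) / Real.sqrt (2 * K * U (q t))) :
    ∀ t ∈ I, HasDerivAt x (r t * w t) t ∧
      HasDerivAt w (-(K * x t * r t) / M) t := by
  intro t ht
  have hqt := hqpos t ht
  have hUq := hUpos _ hqt
  have hU'q := hU'pos _ hqt
  -- useful sqrt facts
  have hs1 : (0:ℝ) < Real.sqrt (2 * U (q t) / K) := Real.sqrt_pos.2 (by positivity)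
  have hs2 : (0:ℝ) < Real.sqrt (2 * K * U (q t)) := Real.sqrt_pos.2 (by positivity)
  have hKx : K * Real.sqrt (2 * U (q t) / K) = Real.sqrt (2 * K * U (q t)) := by
    rw [show K * Real.sqrt (2 * U (q t) / K)
        = Real.sqrt (K ^ 2) * Real.sqrt (2 * U (q t) / K) by
      rw [Real.sqrt_sq hK.le],
      ← Real.sqrt_mul (by positivity)]
    congr 1
    field_simp
  have hmm : Real.sqrt (M / m) * Real.sqrt (m / M) = 1 := by
    rw [← Real.sqrt_mul (by positivity)]
    rw [show M / m * (m / M) = 1 by field_simp]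
    exact Real.sqrt_one
  have hMm : Real.sqrt (m / M) * M = Real.sqrt (M / m) * m := by
    rw [Real.sqrt_div hm.le, Real.sqrt_div hM.le]
    rw [div_mul_eq_mul_div, div_mul_eq_mul_div]
    rw [show M = Real.sqrt M * Real.sqrt M from (Real.mul_self_sqrt hM.le).symm,
        show m = Real.sqrt m * Real.sqrt m from (Real.mul_self_sqrt hm.le).symm]
    have h1 : Real.sqrt M ≠ 0 := by positivity
    have h2 : Real.sqrt m ≠ 0 := by positivity
    field_simp
    simp only [Real.sqrt_sq (Real.sqrt_nonneg m), Real.sqrt_sq (Real.sqrt_nonneg M)] <;> ring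
  -- derivative of x
  have hcomp : HasDerivAt (fun s => U (q s)) (U' (q t) * q' t) t :=
    (hUdiff _ hqt).comp t (hq t ht)
  have h2 : HasDerivAt (fun s => 2 * U (q s) / K) (2 * (U' (q t) * q' t) / K) t := by
    simpa [mul_div_assoc] using (hcomp.const_mul 2).div_const K
  have hne : 2 * U (q t) / K ≠ 0 := by positivity
  have hxd : HasDerivAt x
      (1 / (2 * Real.sqrt (2 * U (q t) / K)) * (2 * (U' (q t) * q' t) / K)) t := by
    have hxe : x = fun s => Real.sqrt (2 * U (q s) / K) := funext hx
    rw [hxe]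
    exact (Real.hasDerivAt_sqrt hne).comp t h2
  have hwd : HasDerivAt w (Real.sqrt (m / M) * q'' t) t := by
    have hwe : w = fun s => Real.sqrt (m / M) * q' s := funext hw
    rw [hwe]
    exact (hq' t ht).const_mul _
  have hq'' : q'' t = -U' (q t) / m := by
    have := hode t ht
    field_simp
    linarith
  constructor
  · convert hxd using 1
    rw [hr, hw]
    rw [← hKx]
    have : Real.sqrt (M / m) * U' (q t) / (K * Real.sqrt (2 * U (q t) / K)) *
        (Real.sqrt (m / M) * q' t)
        = (Real.sqrt (M / m) * Real.sqrt (m / M)) * (U' (q t) * q' t)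
          / (K * Real.sqrt (2 * U (q t) / K)) := by ring
    rw [this, hmm]
    have h1 : Real.sqrt (2 * U (q t) / K) ≠ 0 := ne_of_gt hs1
    field_simp
  · convert hwd using 1
    have e1 : K * x t * r t = Real.sqrt (M / m) * U' (q t) := by
      rw [hx, hr, hKx]
      field_simp
    have e2 : Real.sqrt (m / M) / m = Real.sqrt (M / m) / M := by
      rw [div_eq_div_iff hm.ne' hM.ne']
      linarith [hMm]
    rw [hq'', e1,
      show Real.sqrt (m / M) * (-U' (q t) / m)
        = -(Real.sqrt (m / M) / m * U' (q t)) by ring, e2]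
    ring
end

section
/- Let m, M, K, C₀ > 0 and let U : ℝ → ℝ be differentiable on (0,∞) with U(q) > 0 and U'(q) > 0 for q > 0, and let C : ℝ → ℝ. Let q : ℝ → ℝ be twice differentiable on an open interval I with q(t) > 0 on I, satisfying the damped equation m·q''(t) + C(q(t))·q'(t) + U'(q(t)) = 0 on I. Define x(t) = √(2·U(q(t))/K), w(t) = √(m/M)·q'(t), and r(t) = √(M/m)·U'(q(t))/√(2K·U(q(t))). Then at every t ∈ I with q'(t) ≠ 0, the transformed linear spring–dashpot equation M·w'(t) = −(C₀·w(t) + K·x(t))·r(t) holds if and only if C(q(t)) = C₀·√(m/M)·U'(q(t))/√(2K·U(q(t))). -/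
/-- **Theorem 3, necessity and sufficiency.** For the damped contact
oscillator `m q'' + C(q) q' + U'(q) = 0`, with energy coordinate
`x = √(2U(q)/K)`, transformed velocity `w = √(m/M) q'`, and reparametrisation
rate `r = √(M/m) U'(q)/√(2K U(q))`, at every instant with `q' ≠ 0` the
transformed linear spring–dashpot equation `M w' = −(C₀ w + K x)·r`
(where `w' = √(m/M) q''`) holds **iff** the damping obeys the universal law
`C(q) = C₀ √(m/M) U'(q)/√(2K U(q))`. -/
theorem universal_damping_law_iff
    (m M K C₀ : ℝ) (hm : 0 < m) (hM : 0 < M) (hK : 0 < K) (hC₀ : 0 < C₀)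
    (U U' C : ℝ → ℝ)
    (hUdiff : ∀ s > (0:ℝ), HasDerivAt U (U' s) s)
    (hUpos : ∀ s > (0:ℝ), 0 < U s)
    (hU'pos : ∀ s > (0:ℝ), 0 < U' s)
    (I : Set ℝ) (hI : IsOpen I)
    (q q' q'' : ℝ → ℝ)
    (hq : ∀ t ∈ I, HasDerivAt q (q' t) t)
    (hq' : ∀ t ∈ I, HasDerivAt q' (q'' t) t)
    (hqpos : ∀ t ∈ I, 0 < q t)
    (hode : ∀ t ∈ I, m * q'' t + C (q t) * q' t + U' (q t) = 0)
    (x w r : ℝ → ℝ)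
    (hx : ∀ t, x t = Real.sqrt (2 * U (q t) / K))
    (hw : ∀ t, w t = Real.sqrt (m / M) * q' t)
    (hr : ∀ t, r t = Real.sqrt (M / m) * U' (q t) / Real.sqrt (2 * K * U (q t))) :
    ∀ t ∈ I, q' t ≠ 0 →
      (M * (Real.sqrt (m / M) * q'' t) = -(C₀ * w t + K * x t) * r t ↔
        C (q t) = C₀ * Real.sqrt (m / M) * U' (q t) /
          Real.sqrt (2 * K * U (q t))) := by
  intro t ht hv
  have hqt := hqpos t ht
  have hu : 0 < U (q t) := hUpos _ hqt
  have hu' : 0 < U' (q t) := hU'pos _ hqt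
  have hode' := hode t ht
  set a := Real.sqrt (m / M) with ha_def
  set b := Real.sqrt (M / m) with hb_def
  set s := Real.sqrt (2 * K * U (q t)) with hs_def
  have ha : 0 < a := Real.sqrt_pos.2 (by positivity)
  have hb : 0 < b := Real.sqrt_pos.2 (by positivity)
  have hs : 0 < s := Real.sqrt_pos.2 (by positivity)
  have hab : a * b = 1 := by
    rw [ha_def, hb_def, ← Real.sqrt_mul (by positivity),
      show m / M * (M / m) = 1 by field_simp, Real.sqrt_one]
  have hMaa : M * a * a = m := by
    have h2 : a ^ 2 = m / M := Real.sq_sqrt (by positivity)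
    have : M * a ^ 2 = m := by rw [h2]; field_simp
    nlinarith [this]
  have hKx : K * x t = s := by
    rw [hx t, show 2 * U (q t) / K = 2 * K * U (q t) / K ^ 2 by
      field_simp, Real.sqrt_div (by positivity), Real.sqrt_sq hK.le,
      hs_def]
    field_simp
  rw [hw t, hr t, hKx]
  rw [show b * U' (q t) / s = (b * U' (q t)) / s from rfl,
    show -(C₀ * (a * q' t) + s) * (b * U' (q t) / s)
      = (-(C₀ * (a * q' t) + s) * (b * U' (q t))) / s by ring,
    eq_div_iff hs.ne']
  constructor
  · intro h
    have h5 : m * q'' t * s = -(C₀ * a * q' t + s) * U' (q t) := by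
      linear_combination a * h - q'' t * s * hMaa
        - (C₀ * a * q' t + s) * U' (q t) * hab
    have h6 : C (q t) * s * q' t = C₀ * a * U' (q t) * q' t := by
      linear_combination s * hode' - h5
    rw [eq_div_iff hs.ne']
    exact mul_right_cancel₀ hv (by linear_combination h6)
  · intro h
    have hc : C (q t) * s = C₀ * a * U' (q t) := by
      rw [h]; field_simp
    have hMab : M * a = m * b := by
      linear_combination b * hMaa - M * a * hab
    linear_combination q'' t * s * hMab + b * s * hode' - b * q' t * hc
end

section
/- Let m, M, K, C₀ > 0 and let U : ℝ → ℝ be differentiable on (0,∞) with U(q) > 0 and U'(q) > 0 for q > 0. Define the universal damping law C(q) = C₀·√(m/M)·U'(q)/√(2K·U(q)) for q > 0. If q : ℝ → ℝ is twice differentiable on an open interval I with q(t) > 0 on I and satisfies m·q''(t) + C(q(t))·q'(t) + U'(q(t)) = 0 on I, then with x(t) = √(2·U(q(t))/K), w(t) = √(m/M)·q'(t), and r(t) = √(M/m)·U'(q(t))/√(2K·U(q(t))), for every t ∈ I: x'(t) = r(t)·w(t) and M·w'(t) = −(C₀·w(t) + K·x(t))·r(t); that is, the transformed dynamics are exactly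 the linear damped oscillator M·x'' + C₀·x' + K·x = 0 in the reparametrised time. -/
/-- **sufficiency of the universal damping law.** If the damping
follows the universal law `C(q) = C₀ √(m/M) U'(q)/√(2K U(q))` and `q` solves
`m q'' + C(q) q' + U'(q) = 0` with `q > 0`, then in the transformed variables
`x = √(2U(q)/K)`, `w = √(m/M) q'`, with reparametrisation rate
`r = √(M/m) U'(q)/√(2K U(q))`, the dynamics are exactly the linear damped
oscillator: `x' = r·w` and `M w' = −(C₀ w + K x)·r`, i.e.
`M x'' + C₀ x' + K x = 0` in the reparametrised time. -/
theorem universal_damping_law_linearises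
    (m M K C₀ : ℝ) (hm : 0 < m) (hM : 0 < M) (hK : 0 < K) (hC₀ : 0 < C₀)
    (U U' C : ℝ → ℝ)
    (hUdiff : ∀ s > (0:ℝ), HasDerivAt U (U' s) s)
    (hUpos : ∀ s > (0:ℝ), 0 < U s)
    (hU'pos : ∀ s > (0:ℝ), 0 < U' s)
    (hC : ∀ s > (0:ℝ), C s = C₀ * Real.sqrt (m / M) * U' s /
      Real.sqrt (2 * K * U s))
    (I : Set ℝ) (hI : IsOpen I)
    (q q' q'' : ℝ → ℝ)
    (hq : ∀ t ∈ I, HasDerivAt q (q' t) t)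
    (hq' : ∀ t ∈ I, HasDerivAt q' (q'' t) t)
    (hqpos : ∀ t ∈ I, 0 < q t)
    (hode : ∀ t ∈ I, m * q'' t + C (q t) * q' t + U' (q t) = 0)
    (x w r : ℝ → ℝ)
    (hx : ∀ t, x t = Real.sqrt (2 * U (q t) / K))
    (hw : ∀ t, w t = Real.sqrt (m / M) * q' t)
    (hr : ∀ t, r t = Real.sqrt (M / m) * U' (q t) / Real.sqrt (2 * K * U (q t))) :
    ∀ t ∈ I, HasDerivAt x (r t * w t) t ∧
      HasDerivAt w (-((C₀ * w t + K * x t) * r t) / M) t := by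
  intro t ht
  have hq0 := hqpos t ht
  have hU0 := hUpos _ hq0
  have hU'0 := hU'pos _ hq0
  have hsm : (0:ℝ) < Real.sqrt m := Real.sqrt_pos.mpr hm
  have hsM : (0:ℝ) < Real.sqrt M := Real.sqrt_pos.mpr hM
  have hsK : (0:ℝ) < Real.sqrt K := Real.sqrt_pos.mpr hK
  have hs2 : (0:ℝ) < Real.sqrt 2 := by positivity
  have hsU : (0:ℝ) < Real.sqrt (U (q t)) := Real.sqrt_pos.mpr hU0
  have hm2 : Real.sqrt m * Real.sqrt m = m := Real.mul_self_sqrt hm.le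
  have hM2 : Real.sqrt M * Real.sqrt M = M := Real.mul_self_sqrt hM.le
  have hK2 : Real.sqrt K * Real.sqrt K = K := Real.mul_self_sqrt hK.le
  have hU2 : Real.sqrt (U (q t)) * Real.sqrt (U (q t)) = U (q t) :=
    Real.mul_self_sqrt hU0.le
  have h22 : Real.sqrt 2 * Real.sqrt 2 = 2 := Real.mul_self_sqrt (by norm_num)
  have e_mM : Real.sqrt (m / M) = Real.sqrt m / Real.sqrt M := Real.sqrt_div hm.le M
  have e_Mm : Real.sqrt (M / m) = Real.sqrt M / Real.sqrt m := Real.sqrt_div hM.le m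
  have eA : Real.sqrt (2 * U (q t) / K)
      = Real.sqrt 2 * Real.sqrt (U (q t)) / Real.sqrt K := by
    rw [Real.sqrt_div (by positivity), Real.sqrt_mul (by norm_num)]
  have eB : Real.sqrt (2 * K * U (q t))
      = Real.sqrt 2 * Real.sqrt K * Real.sqrt (U (q t)) := by
    rw [Real.sqrt_mul (by positivity), Real.sqrt_mul (by norm_num)]
  have hxfun : x = fun t => Real.sqrt (2 * U (q t) / K) := funext hx
  have hwfun : w = fun t => Real.sqrt (m / M) * q' t := funext hw
  have hUq : HasDerivAt (fun t => U (q t)) (U' (q t) * q' t) t :=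
    (hUdiff _ hq0).comp t (hq t ht)
  have h1 : HasDerivAt (fun t => 2 * U (q t) / K) (2 * (U' (q t) * q' t) / K) t :=
    (hUq.const_mul 2).div_const K
  have hne : 2 * U (q t) / K ≠ 0 := by positivity
  have h2 := h1.sqrt hne
  constructor
  · rw [hxfun]
    have heq : 2 * (U' (q t) * q' t) / K / (2 * Real.sqrt (2 * U (q t) / K))
        = r t * w t := by
      rw [hr, hw, eA, eB, e_mM, e_Mm]
      set a := Real.sqrt m
      set b := Real.sqrt M
      set c := Real.sqrt K
      set d := Real.sqrt 2
      set e := Real.sqrt (U (q t))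
      rw [← hK2]
      field_simp
    exact heq ▸ h2
  · have h3 : HasDerivAt w (Real.sqrt (m / M) * q'' t) t := by
      rw [hwfun]; exact (hq' t ht).const_mul _
    have hode' := hode t ht
    rw [hC _ hq0] at hode'
    have hq'' : q'' t = -(C₀ * Real.sqrt (m / M) * U' (q t) /
        Real.sqrt (2 * K * U (q t)) * q' t + U' (q t)) / m := by
      rw [eq_div_iff hm.ne']
      linarith
    have heq : Real.sqrt (m / M) * q'' t
        = -((C₀ * w t + K * x t) * r t) / M := by
      rw [hq'', hw, hx, hr, eA, eB, e_mM, e_Mm]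
      set a := Real.sqrt m
      set b := Real.sqrt M
      set c := Real.sqrt K
      set d := Real.sqrt 2
      set e := Real.sqrt (U (q t))
      rw [← hK2, ← hm2, ← hM2]
      field_simp
    exact heq ▸ h3
end

section
/- Let U : ℝ → ℝ be twice differentiable on (0, b] with U(q) > 0 and U'(q) > 0 for q ∈ (0, b]. If the softening condition 2·U(q)·U''(q) ≤ (U'(q))² holds for all q ∈ (0, b], then the function q ↦ U'(q)/√(U(q)) is monotone nonincreasing on (0, b]; in particular the supremum of the transformation gradient over (0, b] is approached as q → 0⁺. -/
/-- **softening contacts.** If `U > 0`, `U' > 0` on `(0, b]` and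
the softening condition `2 U U'' ≤ (U')²` holds there, then the transformation
gradient `q ↦ U'(q)/√(U q)` is monotone nonincreasing on `(0, b]`; in
particular its supremum over `(0, b]` (taken in the extended reals) is
approached as `q → 0⁺`. -/
theorem softening_gradient_antitone
    (b : ℝ) (hb : 0 < b)
    (U U' U'' : ℝ → ℝ)
    (hUdiff : ∀ q ∈ Set.Ioc (0:ℝ) b, HasDerivAt U (U' q) q)
    (hU'diff : ∀ q ∈ Set.Ioc (0:ℝ) b, HasDerivAt U' (U'' q) q)
    (hUpos : ∀ q ∈ Set.Ioc (0:ℝ) b, 0 < U q)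
    (hU'pos : ∀ q ∈ Set.Ioc (0:ℝ) b, 0 < U' q)
    (hsoft : ∀ q ∈ Set.Ioc (0:ℝ) b, 2 * U q * U'' q ≤ (U' q)^2) :
    AntitoneOn (fun q => U' q / Real.sqrt (U q)) (Set.Ioc 0 b) ∧
      Filter.Tendsto (fun q => ((U' q / Real.sqrt (U q) : ℝ) : EReal))
        (nhdsWithin 0 (Set.Ioi 0))
        (nhds (⨆ q ∈ Set.Ioc (0:ℝ) b, ((U' q / Real.sqrt (U q) : ℝ) : EReal))) := by
  set f : ℝ → ℝ := fun q => U' q / Real.sqrt (U q) with hf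
  -- derivative computation
  have key : ∀ q ∈ Set.Ioc (0:ℝ) b, HasDerivAt f
      ((U'' q * Real.sqrt (U q) - U' q * (1 / (2 * Real.sqrt (U q)) * U' q)) /
        (Real.sqrt (U q))^2) q := by
    intro q hq
    have hU : 0 < U q := hUpos q hq
    have hs : 0 < Real.sqrt (U q) := Real.sqrt_pos.2 hU
    have hsq : HasDerivAt (fun x => Real.sqrt (U x))
        (1 / (2 * Real.sqrt (U q)) * U' q) q :=
      (Real.hasDerivAt_sqrt (ne_of_gt hU)).comp q (hUdiff q hq)
    exact (hU'diff q hq).div hsq (ne_of_gt hs)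
  have hAnti : AntitoneOn f (Set.Ioc 0 b) := by
    apply antitoneOn_of_deriv_nonpos (convex_Ioc 0 b)
    · intro q hq
      exact (key q hq).continuousAt.continuousWithinAt
    · intro q hq
      rw [interior_Ioc] at hq
      exact ((key q ⟨hq.1, hq.2.le⟩).differentiableAt.differentiableWithinAt)
    · intro q hq
      rw [interior_Ioc] at hq
      have hq' : q ∈ Set.Ioc (0:ℝ) b := ⟨hq.1, hq.2.le⟩
      have hU : 0 < U q := hUpos q hq'
      have hs : 0 < Real.sqrt (U q) := Real.sqrt_pos.2 hU
      have hs2 : (Real.sqrt (U q))^2 = U q := Real.sq_sqrt hU.le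
      rw [(key q hq').deriv]
      apply div_nonpos_of_nonpos_of_nonneg _ (sq_nonneg _)
      have hsoftq := hsoft q hq'
      rw [sub_nonpos, div_mul_eq_mul_div, one_mul, ← mul_div_assoc, le_div_iff₀ (by positivity)]
      nlinarith [hs.le, hs2]
  refine ⟨hAnti, ?_⟩
  set g : ℝ → EReal := fun q => ((f q : ℝ) : EReal) with hg
  have hAntiE : AntitoneOn g (Set.Ioo 0 b) := fun x hx y hy hxy =>
    EReal.coe_le_coe_iff.2 (hAnti ⟨hx.1, hx.2.le⟩ ⟨hy.1, hy.2.le⟩ hxy)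
  have hne : (Set.Ioo (0:ℝ) b).Nonempty := ⟨b/2, by constructor <;> linarith⟩
  have htend : Filter.Tendsto g (nhdsWithin 0 (Set.Ioi 0))
      (nhds (sSup (g '' Set.Ioo 0 b))) :=
    AntitoneOn.tendsto_nhdsWithin_Ioo_right hne hAntiE (OrderTop.bddAbove _)
  have hsup : sSup (g '' Set.Ioo 0 b) = ⨆ q ∈ Set.Ioc (0:ℝ) b, g q := by
    rw [← sSup_image]
    apply le_antisymm
    · exact sSup_le_sSup (Set.image_mono (f := g) Set.Ioo_subset_Ioc_self)
    · apply sSup_le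
      rintro x ⟨q, hq, rfl⟩
      rcases lt_or_eq_of_le hq.2 with h | h
      · exact le_sSup ⟨q, ⟨hq.1, h⟩, rfl⟩
      · calc g q ≤ g (b/2) := by
              apply EReal.coe_le_coe_iff.2
              apply hAnti ⟨by linarith, by linarith⟩ hq
              linarith [hq.2]
          _ ≤ sSup (g '' Set.Ioo 0 b) := le_sSup ⟨b/2, ⟨by linarith, by linarith⟩, rfl⟩
  rw [hsup] at htend
  exact htend
end

section
/- Let m > 0, v₀ > 0, and let U : ℝ → ℝ be twice differentiable on (0, q_max] with U(q) > 0 and U'(q) > 0 on (0, q_max], satisfying the stiffening condition 2·U(q)·U''(q) ≥ (U'(q))² on (0, q_max], and the maximum-compression energy relation U(q_max) = (1/2)·m·v₀². Then the supremum over q ∈ (0, q_max] of U'(q)/√(2·U(q)) equals U'(q_max)/(√m · v₀), and consequently the closed-form stability bound holds: Δt_safe := 2·√m · (sup_{q ∈ (0,q_max]} U'(q)/√(2·U(q)))⁻¹ = 2·m·v₀ / U'(q_max). -/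
/-- **closed-form stability bound at maximum compression.** For a
monotone stiffening contact (`2 U U'' ≥ (U')²` on `(0, qmax]`) with
`U qmax = (1/2) m v₀²` (energy conservation at maximum compression), the
supremum over `(0, qmax]` of the transformation gradient `U'(q)/√(2 U q)`
equals `U'(qmax)/(√m · v₀)`, and consequently the stability bound
`Δt_safe = 2√m · (sup ...)⁻¹ = 2 m v₀ / U'(qmax)`. -/
theorem stability_bound_at_max_compression
    (m v₀ qmax : ℝ) (hm : 0 < m) (hv₀ : 0 < v₀) (hqmax : 0 < qmax)
    (U U' U'' : ℝ → ℝ)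
    (hUdiff : ∀ q ∈ Set.Ioc (0:ℝ) qmax, HasDerivAt U (U' q) q)
    (hU'diff : ∀ q ∈ Set.Ioc (0:ℝ) qmax, HasDerivAt U' (U'' q) q)
    (hUpos : ∀ q ∈ Set.Ioc (0:ℝ) qmax, 0 < U q)
    (hU'pos : ∀ q ∈ Set.Ioc (0:ℝ) qmax, 0 < U' q)
    (hstiff : ∀ q ∈ Set.Ioc (0:ℝ) qmax, (U' q)^2 ≤ 2 * U q * U'' q)
    (hEnergy : U qmax = (1/2) * m * v₀^2) :
    sSup ((fun q => U' q / Real.sqrt (2 * U q)) '' Set.Ioc (0:ℝ) qmax)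
        = U' qmax / (Real.sqrt m * v₀) ∧
      2 * Real.sqrt m *
        (sSup ((fun q => U' q / Real.sqrt (2 * U q)) '' Set.Ioc (0:ℝ) qmax))⁻¹
        = 2 * m * v₀ / U' qmax := by
  set g : ℝ → ℝ := fun q => U' q / Real.sqrt (2 * U q) with hg
  set h : ℝ → ℝ := fun q => (U' q)^2 / (2 * U q) with hh
  set h' : ℝ → ℝ := fun q =>
      ((2 * U' q ^ 1 * U'' q) * (2 * U q) - (U' q)^2 * (2 * U' q)) / (2 * U q)^2 with hh'
  have hqm : qmax ∈ Set.Ioc (0:ℝ) qmax := ⟨hqmax, le_refl _⟩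
  have hDh : ∀ q ∈ Set.Ioc (0:ℝ) qmax, HasDerivAt h (h' q) q := by
    intro q hq
    have hq' := hUpos q hq
    have hden : (2 : ℝ) * U q ≠ 0 := by positivity
    exact ((hU'diff q hq).pow 2).div ((hUdiff q hq).const_mul 2) hden
  have hcont : ContinuousOn h (Set.Ioc (0:ℝ) qmax) :=
    fun q hq => (hDh q hq).continuousAt.continuousWithinAt
  have hmono : MonotoneOn h (Set.Ioc (0:ℝ) qmax) := by
    apply monotoneOn_of_hasDerivWithinAt_nonneg (convex_Ioc 0 qmax) hcont
        (f' := h')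
    · intro x hx
      rw [interior_Ioc] at hx
      exact (hDh x (Set.Ioo_subset_Ioc_self hx)).hasDerivWithinAt
    · intro x hx
      rw [interior_Ioc] at hx
      have hx' := Set.Ioo_subset_Ioc_self hx
      have h1 := hUpos x hx'
      have h2 := hU'pos x hx'
      have h3 := hstiff x hx'
      apply div_nonneg _ (by positivity)
      nlinarith
  have hgsqrt : ∀ q ∈ Set.Ioc (0:ℝ) qmax, g q = Real.sqrt (h q) := by
    intro q hq
    have h1 := hUpos q hq
    have h2 := hU'pos q hq
    rw [hg, hh]
    simp only
    rw [Real.sqrt_div (by positivity), Real.sqrt_sq h2.le]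
  have key : ∀ q ∈ Set.Ioc (0:ℝ) qmax, g q ≤ g qmax := by
    intro q hq
    rw [hgsqrt q hq, hgsqrt qmax hqm]
    exact Real.sqrt_le_sqrt (hmono hq hqm hq.2)
  have hGreat : IsGreatest (g '' Set.Ioc (0:ℝ) qmax) (g qmax) :=
    ⟨⟨qmax, hqm, rfl⟩, by rintro y ⟨q, hq, rfl⟩; exact key q hq⟩
  have hsup : sSup (g '' Set.Ioc (0:ℝ) qmax) = g qmax := hGreat.csSup_eq
  have hval : g qmax = U' qmax / (Real.sqrt m * v₀) := by
    rw [hg]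
    simp only
    rw [hEnergy]
    have : (2 : ℝ) * ((1/2) * m * v₀^2) = m * v₀^2 := by ring
    rw [this, Real.sqrt_mul hm.le, Real.sqrt_sq hv₀.le]
  have h1 : sSup (g '' Set.Ioc (0:ℝ) qmax) = U' qmax / (Real.sqrt m * v₀) := by
    rw [hsup, hval]
  refine ⟨h1, ?_⟩
  rw [h1]
  have hU' := hU'pos qmax hqm
  have hsm : Real.sqrt m > 0 := Real.sqrt_pos.mpr hm
  have hsm2 : Real.sqrt m * Real.sqrt m = m := Real.mul_self_sqrt hm.le
  field_simp
  nlinarith [hsm2, hU', hv₀, hsm]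
end

section
/- Let m, K, M₀ > 0 and let U : ℝ → ℝ be continuous on [0,∞) and differentiable on (0,∞) with U(0) = 0, U(q) > 0 and U'(q) > 0 for q > 0. Then the effective mass 2·m·K·U(q)/(U'(q))² equals the constant M₀ for all q > 0 if and only if U(q) = (m·K/(2·M₀))·q² for all q ≥ 0. In other words, the point-canonical lift reduces to a constant-mass harmonic oscillator in physical time if and only if U(q) ∝ q². -/
/-- **constant effective mass iff quadratic potential.** For a
contact potential `U` continuous on `[0,∞)`, differentiable on `(0,∞)` with
`U 0 = 0`, `U > 0` and `U' > 0` on `(0,∞)`, the effective mass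
`M_eff(q) = 2 m K U(q)/U'(q)²` is the constant `M₀` for all `q > 0` **iff**
`U(q) = (m K/(2 M₀)) q²` for all `q ≥ 0`. -/
theorem constant_effective_mass_iff_quadratic
    (m K M₀ : ℝ) (hm : 0 < m) (hK : 0 < K) (hM₀ : 0 < M₀)
    (U U' : ℝ → ℝ)
    (hUcont : ContinuousOn U (Set.Ici 0))
    (hU0 : U 0 = 0)
    (hUdiff : ∀ q > (0:ℝ), HasDerivAt U (U' q) q)
    (hUpos : ∀ q > (0:ℝ), 0 < U q)
    (hU'pos : ∀ q > (0:ℝ), 0 < U' q) :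
    (∀ q > (0:ℝ), 2 * m * K * U q / (U' q)^2 = M₀) ↔
      (∀ q ≥ (0:ℝ), U q = (m * K / (2 * M₀)) * q^2) := by
  have ha : 0 < m * K / (2 * M₀) := by positivity
  set a : ℝ := m * K / (2 * M₀) with ha_def
  constructor
  · intro h
    set c : ℝ := Real.sqrt a with hc_def
    have hc : 0 < c := Real.sqrt_pos.mpr ha
    have hc2 : c ^ 2 = a := Real.sq_sqrt ha.le
    set g : ℝ → ℝ := fun q => Real.sqrt (U q) - c * q with hg_def
    have hgderiv : ∀ q > (0:ℝ), HasDerivAt g 0 q := by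
      intro q hq
      have hUq := hUpos q hq
      have h1 : HasDerivAt (fun x => Real.sqrt (U x))
          (1 / (2 * Real.sqrt (U q)) * U' q) q :=
        (Real.hasDerivAt_sqrt hUq.ne').comp q (hUdiff q hq)
      have h2 : HasDerivAt (fun x => c * x) c q := by
        simpa using (hasDerivAt_id q).const_mul c
      have key : 1 / (2 * Real.sqrt (U q)) * U' q = c := by
        have hM := h q hq
        have hU'q := hU'pos q hq
        have hsq : Real.sqrt (U q) ^ 2 = U q := Real.sq_sqrt hUq.le
        have hsqpos : 0 < Real.sqrt (U q) := Real.sqrt_pos.mpr hUq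
        have hc2' : c ^ 2 * (2 * M₀) = m * K := by
          rw [hc2, ha_def]; field_simp
        have hM' : 2 * m * K * U q = M₀ * U' q ^ 2 := by
          field_simp at hM; linarith
        have hsqeq : M₀ * (2 * c * Real.sqrt (U q)) ^ 2 = 2 * m * K * U q := by
          calc M₀ * (2 * c * Real.sqrt (U q)) ^ 2
              = (c ^ 2 * (2 * M₀)) * (2 * Real.sqrt (U q) ^ 2) := by ring
            _ = (m * K) * (2 * U q) := by rw [hc2', hsq]
            _ = 2 * m * K * U q := by ring
        have hXpos : 0 < 2 * c * Real.sqrt (U q) :=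
          mul_pos (mul_pos two_pos hc) hsqpos
        have hsq2 : U' q ^ 2 = (2 * c * Real.sqrt (U q)) ^ 2 :=
          mul_left_cancel₀ hM₀.ne' (by linarith)
        have hUeq : U' q = 2 * c * Real.sqrt (U q) := by
          nlinarith [hsq2, add_pos hU'q hXpos]
        rw [hUeq]
        field_simp
      have := h1.sub h2
      rw [key, sub_self] at this
      exact this
    have hgcont : ContinuousOn g (Set.Ici 0) :=
      (Real.continuous_sqrt.comp_continuousOn hUcont).sub
        (continuous_const.mul continuous_id).continuousOn
    have hint : interior (Set.Ici (0:ℝ)) = Set.Ioi 0 := interior_Ici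
    have hgdiff : DifferentiableOn ℝ g (interior (Set.Ici (0:ℝ))) := by
      rw [hint]; intro x hx
      exact ((hgderiv x hx).differentiableAt).differentiableWithinAt
    have hmono : MonotoneOn g (Set.Ici 0) := by
      apply monotoneOn_of_deriv_nonneg (convex_Ici 0) hgcont hgdiff
      intro x hx
      rw [hint] at hx
      rw [(hgderiv x hx).deriv]
    have hanti : AntitoneOn g (Set.Ici 0) := by
      apply antitoneOn_of_deriv_nonpos (convex_Ici 0) hgcont hgdiff
      intro x hx
      rw [hint] at hx
      rw [(hgderiv x hx).deriv]
    have hg0 : g 0 = 0 := by simp [hg_def, hU0]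
    intro q hq
    have hgq : g q = 0 := by
      have h1 := hmono (Set.self_mem_Ici) hq hq
      have h2 := hanti (Set.self_mem_Ici) hq hq
      rw [hg0] at h1 h2
      linarith
    have hsqrt : Real.sqrt (U q) = c * q := by
      have : Real.sqrt (U q) - c * q = 0 := hgq
      linarith
    rcases eq_or_lt_of_le hq with h0 | h0
    · rw [← h0, hU0]; ring
    · have hUq := hUpos q h0
      have : U q = Real.sqrt (U q) ^ 2 := (Real.sq_sqrt hUq.le).symm
      rw [this, hsqrt, mul_pow, hc2]
  · intro h q hq
    have hUloc : U =ᶠ[nhds q] fun x => a * x ^ 2 := by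
      filter_upwards [IsOpen.mem_nhds isOpen_Ioi hq] with x hx
      exact h x (le_of_lt hx)
    have hderiv2 : HasDerivAt (fun x : ℝ => a * x ^ 2) (a * (2 * q)) q := by
      simpa using ((hasDerivAt_pow 2 q).const_mul a)
    have hU'eq : U' q = a * (2 * q) :=
      (hUdiff q hq).unique (hderiv2.congr_of_eventuallyEq hUloc)
    rw [h q hq.le, hU'eq, ha_def]
    field_simp
end

section
/- Let a, b, c > 0 and define V(δ) = (π·b·c/a²)·(a·δ² − δ³/3) and S(δ) = (π·b·c/a²)·(2·a·δ − δ²), with S'(δ) = (π·b·c/a²)·(2·a − 2·δ). Then for every δ with 0 < δ < 2a, the inequality 4·V(δ)·S'(δ) ≥ S(δ)² holds if and only if δ ≤ (2 − 2·√(2/5))·a. Consequently, for the α = 1/2 volumetric ellipsoid contact model (where the stiffening condition 2·U·U'' ≥ (U')² is equivalent to (α−1)·S² + 2·V·S' ≥ 0, i.e. to 4·V·S' ≥ S²), the model is monotone stiffening precisely on the penetration range 0 < δ ≤ (2 − 2·√(2/5))·a ≈ 0.735·a. -/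
/-- **stiffening range for the α = 1/2 ellipsoid model.** For the
ellipsoid overlap volume `V(δ) = (πbc/a²)(aδ² − δ³/3)`, contact area
`S(δ) = (πbc/a²)(2aδ − δ²)` and its derivative `S'(δ) = (πbc/a²)(2a − 2δ)`,
for every `0 < δ < 2a` the stiffening inequality `4 V S' ≥ S²` (equivalent to
`2 U U'' ≥ (U')²` for the `α = 1/2` volumetric model) holds iff
`δ ≤ (2 − 2√(2/5)) a ≈ 0.735 a`. -/
theorem ellipsoid_stiffening_range
    (a b c : ℝ) (ha : 0 < a) (hb : 0 < b) (hc : 0 < c)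
    (V S S' : ℝ → ℝ)
    (hV : ∀ δ : ℝ, V δ = Real.pi * b * c / a ^ 2 * (a * δ ^ 2 - δ ^ 3 / 3))
    (hS : ∀ δ : ℝ, S δ = Real.pi * b * c / a ^ 2 * (2 * a * δ - δ ^ 2))
    (hS' : ∀ δ : ℝ, S' δ = Real.pi * b * c / a ^ 2 * (2 * a - 2 * δ)) :
    ∀ δ : ℝ, 0 < δ → δ < 2 * a →
      (4 * V δ * S' δ ≥ (S δ) ^ 2 ↔ δ ≤ (2 - 2 * Real.sqrt (2 / 5)) * a) := by
  intro δ hδ hδ2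
  rw [hV, hS, hS']
  set P : ℝ := Real.pi * b * c / a ^ 2 with hPdef
  have hP : 0 < P := by
    apply div_pos (by positivity) (by positivity)
  set s : ℝ := Real.sqrt (2 / 5) with hsdef
  have hs0 : 0 < s := Real.sqrt_pos.mpr (by norm_num)
  have hs2 : s ^ 2 = 2 / 5 := Real.sq_sqrt (by norm_num)
  -- key identity: 4 V S' - S^2 = P^2 * δ^2 * (5δ² - 20aδ + 12a²) / 3
  have key : 4 * (P * (a * δ ^ 2 - δ ^ 3 / 3)) * (P * (2 * a - 2 * δ)) -
      (P * (2 * a * δ - δ ^ 2)) ^ 2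
      = P ^ 2 * δ ^ 2 * (5 * δ ^ 2 - 20 * a * δ + 12 * a ^ 2) / 3 := by ring
  have hPδ : 0 < P ^ 2 * δ ^ 2 := by positivity
  constructor
  · intro h
    have hQ : 0 ≤ 5 * δ ^ 2 - 20 * a * δ + 12 * a ^ 2 := by
      by_contra hneg
      push_neg at hneg
      nlinarith [mul_neg_of_pos_of_neg hPδ hneg]
    -- δ < 2a < (2+2s)a, so (δ - (2+2s)a) < 0; from Q ≥ 0 get δ ≤ (2-2s)a
    by_contra h'
    push_neg at h'
    have h1 : 0 < δ - (2 - 2 * s) * a := by linarith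
    have h2 : δ - (2 + 2 * s) * a < 0 := by nlinarith [mul_pos hs0 ha]
    nlinarith [mul_neg_of_pos_of_neg h1 h2]
  · intro h
    have h1 : 0 ≤ (2 - 2 * s) * a - δ := by linarith
    have h2 : 0 < (2 + 2 * s) * a - δ := by nlinarith [mul_pos hs0 ha]
    have hQ : 0 ≤ 5 * δ ^ 2 - 20 * a * δ + 12 * a ^ 2 := by
      nlinarith [mul_nonneg h1 h2.le]
    nlinarith [mul_nonneg hPδ.le hQ]
end
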